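/- Let a_1, a_2, a_3 ∈ ℂ be pairwise distinct with a_1 ≠ 0, and suppose there exist a, b ∈ ℝ, with a > 0, real intensities ξ_1, ξ_2, ξ_3 ≠ 0, a constant c_α ∈ ℝ, and α ∈ (0,3), α ≠ 2, such that for every j, i·c_α·Σ_{k≠j} ξ_k |a_j − a_k|^(α−2)/(a_j − a_k) = conj(a_j)(a − i b). Define, for t > 0, Z(t) = ((4−α)·a·t)^(1/(4−α)) · exp(i(θ_0 + (b/((4−α)a))·log t)) for a fixed θ_0 ∈ ℝ, and set w_j(t) = a_j Z(t). Then for all t > 0 and each j, the derivative of the complex conjugate of w_j satisfies d/dt conj(w_j(t)) = i·c_α·Σ_{k≠j} ξ_k |w_j(t) − w_k(t)|^(α−2)/(w_j(t) − w_k(t)). -/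

import Mathlib

open Complex Real Finset

lemma aux_ne_stmt6 (a₁ a₂ a₃ : ℂ) (h12 : a₁ ≠ a₂) (h23 : a₂ ≠ a₃) (h13 : a₁ ≠ a₃)
    (j k : Fin 3) (h : j ≠ k) : ![a₁,a₂,a₃] j ≠ ![a₁,a₂,a₃] k := by
  fin_cases j <;> fin_cases k <;> simp_all <;> tauto

theorem stmt_6 (a₁ a₂ a₃ : ℂ) (hne : a₁ ≠ a₂ ∧ a₂ ≠ a₃ ∧ a₁ ≠ a₃) (ha₁ : a₁ ≠ 0)
    (av : Fin 3 → ℂ) (hav : av = ![a₁, a₂, a₃])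
    (a b : ℝ) (ha : 0 < a)
    (ξ : Fin 3 → ℝ) (hξ : ∀ j, ξ j ≠ 0)
    (cα : ℝ) (α : ℝ) (hα : α ∈ Set.Ioo (0:ℝ) 3) (hα2 : α ≠ 2)
    (hss : ∀ j : Fin 3,
      Complex.I * cα * ∑ k ∈ Finset.univ.erase j,
        (ξ k : ℂ) * ((‖av j - av k‖ ^ (α - 2) : ℝ) : ℂ) / (av j - av k)
      = starRingEnd ℂ (av j) * ((a : ℂ) - Complex.I * b))
    (θ₀ : ℝ)
    (Z : ℝ → ℂ)
    (hZ : ∀ t > (0:ℝ), Z t = (((4 - α) * a * t) ^ ((1:ℝ) / (4 - α)) : ℝ) *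
      Complex.exp (Complex.I * (θ₀ + (b / ((4 - α) * a)) * Real.log t)))
    (w : Fin 3 → ℝ → ℂ) (hw : ∀ j t, w j t = av j * Z t) :
    ∀ t > (0:ℝ), ∀ j : Fin 3,
      HasDerivAt (fun s => starRingEnd ℂ (w j s))
        (Complex.I * cα * ∑ k ∈ Finset.univ.erase j,
          (ξ k : ℂ) * ((‖w j t - w k t‖ ^ (α - 2) : ℝ) : ℂ) / (w j t - w k t)) t := by
  obtain ⟨hα0, hα3⟩ := hα
  intro t ht j
  have h4 : (0:ℝ) < 4 - α := by linarith
  set c : ℝ := (4 - α) * a with hcdef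
  have hc : 0 < c := mul_pos h4 ha
  have hct : 0 < c * t := mul_pos hc ht
  set γ : ℝ := 1/(4-α) with hγdef
  set β : ℝ := b / c with hβdef
  set r : ℝ := (c*t) ^ γ with hrdef
  have hr : 0 < r := Real.rpow_pos_of_pos hct γ
  set θ : ℝ := θ₀ + β * Real.log t with hθdef
  have hZt : Z t = (r:ℂ) * Complex.exp (Complex.I * θ) := by
    rw [hZ t ht]; push_cast [hrdef, hθdef, hβdef, hcdef]; ring_nf
  have hEne : Complex.exp (Complex.I * θ) ≠ 0 := Complex.exp_ne_zero _
  have hZne : Z t ≠ 0 := by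
    rw [hZt]; exact mul_ne_zero (by exact_mod_cast hr.ne') hEne
  have absZ : ‖Z t‖ = r := by
    rw [hZt]; simp [map_mul, Complex.norm_exp, abs_of_pos hr]
  have hrm1 : r ^ (α-4) = (c*t)⁻¹ := by
    rw [hrdef, ← Real.rpow_mul hct.le]
    have : γ * (α-4) = -1 := by rw [hγdef]; field_simp; ring
    rw [this, Real.rpow_neg_one]
  have hrpow : r ^ (α-2) = r^(2:ℕ) * (c*t)⁻¹ := by
    have h1 : r ^ (α-2) = r ^ (α-4) * r ^ (2:ℝ) := by
      rw [← Real.rpow_add hr]; congr 1; ring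
    rw [h1, hrm1, Real.rpow_two]; ring
  have hsum : (∑ k ∈ Finset.univ.erase j,
        (ξ k : ℂ) * ((‖w j t - w k t‖ ^ (α - 2) : ℝ) : ℂ) / (w j t - w k t))
      = (∑ k ∈ Finset.univ.erase j,
        (ξ k : ℂ) * ((‖av j - av k‖ ^ (α - 2) : ℝ) : ℂ) / (av j - av k))
        * (((r ^ (α-2) : ℝ) : ℂ) / Z t) := by
    rw [Finset.sum_mul]
    refine Finset.sum_congr rfl ?_
    intro k hk
    have hkj : k ≠ j := Finset.ne_of_mem_erase hk
    have hjk : av j ≠ av k := by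
      rw [hav]; exact aux_ne_stmt6 a₁ a₂ a₃ hne.1 hne.2.1 hne.2.2 j k hkj.symm
    have hd : av j - av k ≠ 0 := sub_ne_zero.mpr hjk
    have hwdiff : w j t - w k t = (av j - av k) * Z t := by rw [hw, hw]; ring
    rw [hwdiff, norm_mul, absZ, Real.mul_rpow (norm_nonneg _) hr.le]
    push_cast
    field_simp
  have hmain : Complex.I * cα * (∑ k ∈ Finset.univ.erase j,
        (ξ k : ℂ) * ((‖w j t - w k t‖ ^ (α - 2) : ℝ) : ℂ) / (w j t - w k t))
      = starRingEnd ℂ (av j) * ((a:ℂ) - Complex.I * b) * (((r ^ (α-2) : ℝ) : ℂ) / Z t) := by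
    rw [hsum, ← mul_assoc, hss j]
  have hX : ((r ^ (α-2) : ℝ) : ℂ) / Z t
      = (r:ℂ) * Complex.exp (-(Complex.I * θ)) * (((c*t:ℝ):ℂ))⁻¹ := by
    rw [hZt, hrpow, Complex.exp_neg]
    push_cast
    have hrC : (r:ℂ) ≠ 0 := by exact_mod_cast hr.ne'
    have hctC : ((c:ℂ) * t) ≠ 0 := by exact_mod_cast (ne_of_gt hct : c * t ≠ 0)
    field_simp
  -- the explicit function and its derivative
  set q : ℂ := (b:ℂ) / (((4:ℂ) - (α:ℂ)) * (a:ℂ)) with hqdef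
  set F : ℝ → ℂ := fun s => starRingEnd ℂ (av j) *
      ((((c*s) ^ γ : ℝ) : ℂ) *
        Complex.exp (-(Complex.I * ((θ₀:ℂ) + q * (Real.log s : ℂ))))) with hFdef
  have h1r : HasDerivAt (fun s : ℝ => (c*s) ^ γ) (γ * (c*t)^(γ-1) * c) t := by
    have h1 : HasDerivAt (fun s : ℝ => c * s) c t := by
      simpa using (hasDerivAt_id t).const_mul c
    have h2 := Real.hasDerivAt_rpow_const (x := c*t) (p := γ) (Or.inl hct.ne')
    exact h2.comp t h1
  have h1 : HasDerivAt (fun s : ℝ => (((c*s) ^ γ : ℝ) : ℂ))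
      ((γ * (c*t)^(γ-1) * c : ℝ) : ℂ) t := h1r.ofReal_comp
  have hlog : HasDerivAt (fun s : ℝ => ((Real.log s : ℝ) : ℂ)) ((t⁻¹ : ℝ) : ℂ) t :=
    (Real.hasDerivAt_log ht.ne').ofReal_comp
  have h2 : HasDerivAt (fun s : ℝ =>
      Complex.exp (-(Complex.I * ((θ₀:ℂ) + q * (Real.log s : ℂ)))))
      (Complex.exp (-(Complex.I * ((θ₀:ℂ) + q * (Real.log t : ℂ)))) *
        (-(Complex.I * (q * ((t⁻¹:ℝ):ℂ))))) t :=
    (((hlog.const_mul q).const_add (θ₀:ℂ)).const_mul Complex.I).neg.cexp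
  have hF : HasDerivAt F (starRingEnd ℂ (av j) *
      (((γ * (c*t)^(γ-1) * c : ℝ) : ℂ) *
          Complex.exp (-(Complex.I * ((θ₀:ℂ) + q * (Real.log t : ℂ)))) +
        (((c*t) ^ γ : ℝ) : ℂ) *
          (Complex.exp (-(Complex.I * ((θ₀:ℂ) + q * (Real.log t : ℂ)))) *
            (-(Complex.I * (q * ((t⁻¹:ℝ):ℂ))))))) t := (h1.mul h2).const_mul _
  -- eventual equality
  have hEv : (fun s => starRingEnd ℂ (w j s)) =ᶠ[nhds t] F := by
    filter_upwards [isOpen_Ioi.mem_nhds ht] with s hs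
    rw [hw, hZ s hs, hFdef, hqdef]
    simp only [map_mul, map_add, map_sub, map_div₀, Complex.conj_ofReal, Complex.conj_I,
      ← Complex.exp_conj, map_ofNat]
    ring_nf
  -- exponent argument equals -(I θ)
  have harg : -(Complex.I * ((θ₀:ℂ) + q * (Real.log t : ℂ))) = -(Complex.I * (θ:ℂ)) := by
    rw [hqdef, hθdef, hβdef, hcdef]
    push_cast
    have h4C : ((4:ℂ) - α) ≠ 0 := by exact_mod_cast h4.ne'
    have haC : (a:ℂ) ≠ 0 := by exact_mod_cast ha.ne'
    field_simp
  -- derivative coefficient algebra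
  have hder : γ * (c*t)^(γ-1) * c = γ * r / t := by
    rw [Real.rpow_sub hct, Real.rpow_one, ← hrdef]
    field_simp [hc.ne', ht.ne']
  -- finish
  have hval : Complex.I * cα * (∑ k ∈ Finset.univ.erase j,
        (ξ k : ℂ) * ((‖w j t - w k t‖ ^ (α - 2) : ℝ) : ℂ) / (w j t - w k t))
      = starRingEnd ℂ (av j) *
      (((γ * (c*t)^(γ-1) * c : ℝ) : ℂ) *
          Complex.exp (-(Complex.I * ((θ₀:ℂ) + q * (Real.log t : ℂ)))) +
        (((c*t) ^ γ : ℝ) : ℂ) *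
          (Complex.exp (-(Complex.I * ((θ₀:ℂ) + q * (Real.log t : ℂ)))) *
            (-(Complex.I * (q * ((t⁻¹:ℝ):ℂ)))))) := by
    rw [hmain, hX, harg, hder, ← hrdef, hqdef, hcdef, hγdef]
    push_cast
    have h4C : ((4:ℂ) - α) ≠ 0 := by exact_mod_cast h4.ne'
    have haC : (a:ℂ) ≠ 0 := by exact_mod_cast ha.ne'
    have htC : (t:ℂ) ≠ 0 := by exact_mod_cast ht.ne'
    field_simp
    ring
  rw [hval]
  exact hF.congr_of_eventuallyEq hEv
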